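/- Fix a time t ≥ 1 with t ≤ n². For the lazy random walk on the cycle C_{2n}, the probability q(t) that the walk started at vertex 1 is again at vertex 1 at time t satisfies q(t) ≤ C/√t for some absolute constant C > 0 independent of n and t. -/

import Mathlib

open Complex Finset
set_option linter.unusedSectionVars false

variable (m : ℕ) [NeZero m]

noncomputable def rc : ℂ := Complex.exp (2 * Real.pi * I / m)

noncomputable def psi (x : ZMod m) : ℂ := rc m ^ x.val

lemma rc_pow_m : rc m ^ m = 1 := by
  rw [rc, ← Complex.exp_nat_mul]
  have hm : (m : ℂ) ≠ 0 := Nat.cast_ne_zero.2 (NeZero.ne m)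
  rw [show (m:ℂ) * (2 * Real.pi * I / m) = 2 * Real.pi * I by field_simp]
  exact Complex.exp_two_pi_mul_I

lemma rc_pow_mod (s : ℕ) : rc m ^ (s % m) = rc m ^ s := by
  conv_rhs => rw [← Nat.mod_add_div s m]
  rw [pow_add, pow_mul, rc_pow_m, one_pow, mul_one]

lemma psi_add (x y : ZMod m) : psi m (x + y) = psi m x * psi m y := by
  rw [psi, psi, psi, ZMod.val_add, rc_pow_mod, pow_add]

lemma psi_zero : psi m 0 = 1 := by
  rw [psi, ZMod.val_zero, pow_zero]

lemma psi_nsmul (c : ℕ) (x : ZMod m) : psi m (c • x) = psi m x ^ c := by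
  induction c with
  | zero => simp [psi_zero]
  | succ d ih => rw [succ_nsmul, psi_add, ih, pow_succ]

lemma psi_mul (k x : ZMod m) : psi m (k * x) = psi m x ^ k.val := by
  rw [← psi_nsmul, nsmul_eq_mul, ZMod.natCast_zmod_val]

lemma psi_pow_card (x : ZMod m) : psi m x ^ m = 1 := by
  rw [psi, ← pow_mul, mul_comm, pow_mul, rc_pow_m, one_pow]

lemma psi_exp (x : ZMod m) : psi m x = Complex.exp ((2 * Real.pi * x.val / m : ℝ) * I) := by
  rw [psi, rc, ← Complex.exp_nat_mul]
  push_cast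
  ring_nf

lemma psi_ne_one {x : ZMod m} (hx : x ≠ 0) : psi m x ≠ 1 := by
  rw [psi_exp]
  intro h
  rw [Complex.exp_eq_one_iff] at h
  obtain ⟨j, hj⟩ := h
  have hm : (m : ℂ) ≠ 0 := Nat.cast_ne_zero.2 (NeZero.ne m)
  have h2 : (2 * Real.pi * I : ℂ) ≠ 0 := by
    simp [Real.pi_ne_zero, Complex.I_ne_zero]
  have hre : (2 * Real.pi * x.val / m : ℝ) = j * (2 * Real.pi) := by
    have him := congrArg Complex.im hj
    simpa using him
  have : (x.val : ℝ) = j * m := by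
    have hmr : (m : ℝ) ≠ 0 := Nat.cast_ne_zero.2 (NeZero.ne m)
    have h2p : (2 * Real.pi : ℝ) ≠ 0 := by positivity
    field_simp at hre
    have h3 : (x.val : ℝ) * (2 * Real.pi) = ((j : ℝ) * m) * (2 * Real.pi) := by
      linear_combination (2 * Real.pi) * hre
    exact mul_right_cancel₀ h2p h3
  have hzv : (x.val : ℤ) = j * m := by exact_mod_cast this
  have hvpos : 0 < x.val := Nat.pos_of_ne_zero (fun h0 => hx (by rwa [← ZMod.val_eq_zero]))
  have hvlt : x.val < m := ZMod.val_lt x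
  have hdvd : (m : ℤ) ∣ (x.val : ℤ) := ⟨j, by rw [hzv]; ring⟩
  have := Int.le_of_dvd (by exact_mod_cast hvpos) hdvd
  omega

lemma sum_val {β : Type*} [AddCommMonoid β] (g : ℕ → β) :
    ∑ k : ZMod m, g k.val = ∑ j ∈ Finset.range m, g j := by
  refine Finset.sum_nbij' (fun k => k.val) (fun j => (j : ZMod m)) ?_ ?_ ?_ ?_ ?_
  · intro k _; exact Finset.mem_range.2 (ZMod.val_lt k)
  · intro j _; exact Finset.mem_univ _
  · intro k _; exact ZMod.natCast_zmod_val k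
  · intro j hj; exact ZMod.val_cast_of_lt (Finset.mem_range.1 hj)
  · intro k _; rfl

lemma orth {x : ZMod m} (hx : x ≠ 0) : ∑ k : ZMod m, psi m (k * x) = 0 := by
  have h1 : ∑ k : ZMod m, psi m (k * x) = ∑ j ∈ Finset.range m, psi m x ^ j := by
    simp_rw [psi_mul]
    exact sum_val m _
  rw [h1]
  have h2 := geom_sum_mul (psi m x) m
  rw [psi_pow_card, sub_self] at h2
  rcases mul_eq_zero.1 h2 with h | h
  · exact h
  · exact absurd (sub_eq_zero.1 h) (psi_ne_one m hx)

lemma orth_zero : ∑ k : ZMod m, psi m (k * 0) = (m : ℂ) := by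
  simp [psi_zero, Finset.card_univ]

noncomputable def lam (k : ZMod m) : ℝ := (1 + 2 * Real.cos (2 * Real.pi * k.val / m)) / 3

lemma psi_neg (k : ZMod m) : psi m (-k) * psi m k = 1 := by
  rw [← psi_add, neg_add_cancel, psi_zero]

lemma lam_val (k : ZMod m) :
    ((lam m k : ℝ) : ℂ) = (1 + psi m k + psi m (-k)) / 3 := by
  have h1 : psi m k = Complex.exp ((2 * Real.pi * k.val / m : ℝ) * I) := psi_exp m k
  have h2 : psi m (-k) = Complex.exp (-((2 * Real.pi * k.val / m : ℝ) * I)) := by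
    rw [Complex.exp_neg]
    apply eq_inv_of_mul_eq_one_left
    rw [← h1, psi_neg]
  rw [lam, h1, h2]
  push_cast [Complex.ofReal_cos]
  have := Complex.two_cos (x := ((2 * Real.pi * k.val / m : ℝ) : ℂ))
  push_cast at this
  rw [neg_mul] at this
  linear_combination this / 3

lemma zmod_one_ne_zero (hm4 : 4 ≤ m) : (1 : ZMod m) ≠ 0 := by
  have : ((1:ℕ) : ZMod m) ≠ 0 := by
    intro h
    have := (ZMod.natCast_eq_zero_iff 1 m).1 h
    have := Nat.le_of_dvd one_pos this
    omega
  simpa using this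

lemma zmod_two_ne_zero (hm4 : 4 ≤ m) : (2 : ZMod m) ≠ 0 := by
  have : ((2:ℕ) : ZMod m) ≠ 0 := by
    intro h
    have := (ZMod.natCast_eq_zero_iff 2 m).1 h
    have := Nat.le_of_dvd two_pos this
    omega
  simpa using this

lemma eigen (hm4 : 4 ≤ m) (P : Matrix (ZMod m) (ZMod m) ℝ)
    (hP : ∀ i j : ZMod m, P i j = if j = i - 1 ∨ j = i ∨ j = i + 1 then (1/3 : ℝ) else 0)
    (k i : ZMod m) :
    ∑ j : ZMod m, (P i j : ℂ) * psi m (k * j) = (lam m k : ℂ) * psi m (k * i) := by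
  have hne1 : i - 1 ≠ i := fun h => zmod_one_ne_zero m hm4 (by linear_combination -h)
  have hne2 : i + 1 ≠ i := fun h => zmod_one_ne_zero m hm4 (by linear_combination h)
  have hne3 : i - 1 ≠ i + 1 := fun h => zmod_two_ne_zero m hm4 (by linear_combination -h)
  have step : ∀ j : ZMod m, (P i j : ℂ) * psi m (k * j) =
      (if j = i - 1 then (1/3:ℂ) * psi m (k * j) else 0) +
      ((if j = i then (1/3:ℂ) * psi m (k * j) else 0) +
      (if j = i + 1 then (1/3:ℂ) * psi m (k * j) else 0)) := by
    intro j
    rw [hP]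
    by_cases h1 : j = i - 1
    · subst h1
      rw [if_pos (Or.inl rfl), if_pos rfl, if_neg hne1, if_neg hne3]
      push_cast; ring
    · by_cases h2 : j = i
      · subst h2
        rw [if_pos (Or.inr (Or.inl rfl)), if_neg (Ne.symm hne1), if_pos rfl,
          if_neg (Ne.symm hne2)]
        push_cast; ring
      · by_cases h3 : j = i + 1
        · subst h3
          rw [if_pos (Or.inr (Or.inr rfl)), if_neg (Ne.symm hne3), if_neg hne2, if_pos rfl]
          push_cast; ring
        · rw [if_neg (by tauto), if_neg h1, if_neg h2, if_neg h3]
          push_cast; ring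
  rw [Finset.sum_congr rfl (fun j _ => step j), Finset.sum_add_distrib, Finset.sum_add_distrib]
  rw [Finset.sum_ite_eq' Finset.univ (i-1), Finset.sum_ite_eq' Finset.univ i,
    Finset.sum_ite_eq' Finset.univ (i+1)]
  simp only [Finset.mem_univ, if_true]
  have e1 : k * (i - 1) = k * i + (-k) := by ring
  have e2 : k * (i + 1) = k * i + k := by ring
  rw [e1, e2, psi_add, psi_add, lam_val]
  ring

lemma eigen_pow (hm4 : 4 ≤ m) (P : Matrix (ZMod m) (ZMod m) ℝ)
    (hP : ∀ i j : ZMod m, P i j = if j = i - 1 ∨ j = i ∨ j = i + 1 then (1/3 : ℝ) else 0)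
    (k : ZMod m) (t : ℕ) : ∀ i : ZMod m,
    ∑ j : ZMod m, ((P ^ t) i j : ℂ) * psi m (k * j) = ((lam m k : ℂ)) ^ t * psi m (k * i) := by
  induction t with
  | zero =>
    intro i
    simp only [pow_zero, Matrix.one_apply, one_mul]
    rw [Finset.sum_congr rfl (fun j _ => by
      rw [show (((if i = j then (1:ℝ) else 0) : ℝ) : ℂ) * psi m (k * j)
        = if i = j then psi m (k * j) else 0 by split <;> simp])]
    rw [Finset.sum_ite_eq Finset.univ i]
    simp
  | succ s ih =>
    intro i
    have hps : P ^ (s + 1) = P * P ^ s := by rw [pow_succ']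
    calc ∑ j : ZMod m, ((P ^ (s+1)) i j : ℂ) * psi m (k * j)
        = ∑ j : ZMod m, (∑ l : ZMod m, (P i l : ℂ) * ((P ^ s) l j : ℂ)) * psi m (k * j) := by
          apply Finset.sum_congr rfl; intro j _
          rw [hps, Matrix.mul_apply]; push_cast; ring
      _ = ∑ l : ZMod m, (P i l : ℂ) * (∑ j : ZMod m, ((P ^ s) l j : ℂ) * psi m (k * j)) := by
          rw [Finset.sum_congr rfl (fun j (_ : j ∈ Finset.univ) => Finset.sum_mul Finset.univ
            (fun l => (P i l : ℂ) * ((P ^ s) l j : ℂ)) (psi m (k * j))), Finset.sum_comm]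
          apply Finset.sum_congr rfl; intro l _
          rw [Finset.mul_sum]
          apply Finset.sum_congr rfl; intro j _; ring
      _ = ∑ l : ZMod m, (P i l : ℂ) * (((lam m k : ℂ)) ^ s * psi m (k * l)) := by
          apply Finset.sum_congr rfl; intro l _; rw [ih l]
      _ = ((lam m k : ℂ)) ^ s * ∑ l : ZMod m, (P i l : ℂ) * psi m (k * l) := by
          rw [Finset.mul_sum]; apply Finset.sum_congr rfl; intro l _; ring
      _ = ((lam m k : ℂ)) ^ (s+1) * psi m (k * i) := by
          rw [eigen m hm4 P hP k i]; ring

lemma main_identity (hm4 : 4 ≤ m) (P : Matrix (ZMod m) (ZMod m) ℝ)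
    (hP : ∀ i j : ZMod m, P i j = if j = i - 1 ∨ j = i ∨ j = i + 1 then (1/3 : ℝ) else 0)
    (t : ℕ) : (m : ℝ) * (P ^ t) 1 1 = ∑ k : ZMod m, (lam m k) ^ t := by
  have key : ∑ k : ZMod m, psi m (-k) * (∑ j : ZMod m, ((P ^ t) 1 j : ℂ) * psi m (k * j))
      = ∑ k : ZMod m, ((lam m k : ℂ)) ^ t := by
    apply Finset.sum_congr rfl; intro k _
    rw [eigen_pow m hm4 P hP k t 1, mul_one]
    calc psi m (-k) * ((lam m k : ℂ) ^ t * psi m k)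
        = (lam m k : ℂ) ^ t * (psi m (-k) * psi m k) := by ring
      _ = (lam m k : ℂ) ^ t := by rw [psi_neg, mul_one]
  have inner : ∀ j : ZMod m, ∑ k : ZMod m, psi m (k * (j - 1)) = if j = 1 then (m:ℂ) else 0 := by
    intro j
    by_cases hj : j = 1
    · rw [hj, if_pos rfl]
      simpa using orth_zero m
    · rw [if_neg hj]
      exact orth m (sub_ne_zero.2 hj)
  have lhs : ∑ k : ZMod m, psi m (-k) * (∑ j : ZMod m, ((P ^ t) 1 j : ℂ) * psi m (k * j))
      = (m : ℂ) * (((P ^ t) 1 1 : ℝ) : ℂ) := by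
    calc ∑ k : ZMod m, psi m (-k) * (∑ j : ZMod m, ((P ^ t) 1 j : ℂ) * psi m (k * j))
        = ∑ k : ZMod m, ∑ j : ZMod m, ((P ^ t) 1 j : ℂ) * psi m (k * (j - 1)) := by
          apply Finset.sum_congr rfl; intro k _
          rw [Finset.mul_sum]
          apply Finset.sum_congr rfl; intro j _
          have hpsi : psi m (-k) * psi m (k * j) = psi m (k * (j - 1)) := by
            rw [← psi_add]; congr 1; ring
          calc psi m (-k) * (((P ^ t) 1 j : ℂ) * psi m (k * j))
              = ((P ^ t) 1 j : ℂ) * (psi m (-k) * psi m (k * j)) := by ring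
            _ = ((P ^ t) 1 j : ℂ) * psi m (k * (j - 1)) := by rw [hpsi]
      _ = ∑ j : ZMod m, ∑ k : ZMod m, ((P ^ t) 1 j : ℂ) * psi m (k * (j - 1)) := Finset.sum_comm
      _ = ∑ j : ZMod m, ((P ^ t) 1 j : ℂ) * (if j = 1 then (m:ℂ) else 0) := by
          apply Finset.sum_congr rfl; intro j _
          rw [← Finset.mul_sum, inner j]
      _ = (m : ℂ) * (((P ^ t) 1 1 : ℝ) : ℂ) := by
          simp only [mul_ite, mul_zero]
          rw [Finset.sum_ite_eq' Finset.univ (1 : ZMod m)]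
          simp [mul_comm]
  apply Complex.ofReal_injective
  push_cast
  rw [← lhs, key]

lemma cos_upper {θ : ℝ} (h0 : 0 ≤ θ) (hπ : θ ≤ Real.pi) :
    Real.cos θ ≤ 1 - 2 * (θ / Real.pi) ^ 2 := by
  have hπpos := Real.pi_pos
  have hs : θ / Real.pi ≤ Real.sin (θ / 2) := by
    have := Real.mul_le_sin (x := θ / 2) (by linarith) (by linarith)
    calc θ / Real.pi = 2 / Real.pi * (θ / 2) := by field_simp
      _ ≤ Real.sin (θ / 2) := this
  have hcos : Real.cos θ = 1 - 2 * Real.sin (θ / 2) ^ 2 := by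
    have h1 := Real.cos_two_mul' (θ / 2)
    rw [show 2 * (θ / 2) = θ by ring] at h1
    have h2 := Real.sin_sq_add_cos_sq (θ / 2)
    linarith
  have hdp : 0 ≤ θ / Real.pi := by positivity
  nlinarith [hs, hdp]

lemma lam_abs_le (k : ZMod m) :
    |lam m k| ≤ Real.exp (-(2 * (((min k.val (m - k.val) : ℕ) : ℝ) / m) ^ 2)) := by
  have hm0 : 0 < m := Nat.pos_of_ne_zero (NeZero.ne m)
  have hmr : (0:ℝ) < m := by exact_mod_cast hm0
  have hπ := Real.pi_pos
  set v := k.val with hv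
  have hvlt : v < m := ZMod.val_lt k
  set w : ℕ := min v (m - v) with hw
  have hw2 : 2 * w ≤ m := by omega
  set d : ℝ := (w : ℝ) / m with hd
  have hd0 : 0 ≤ d := by positivity
  have hdhalf : d ≤ 1 / 2 := by
    rw [hd, div_le_iff₀ hmr]
    push_cast
    have : (2:ℝ) * w ≤ m := by exact_mod_cast hw2
    linarith
  -- cos equality
  have hcos_eq : Real.cos (2 * Real.pi * v / m) = Real.cos (2 * Real.pi * w / m) := by
    rcases Nat.le_total v (m - v) with h | h
    · rw [hw, min_eq_left h]
    · rw [hw, min_eq_right h]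
      have hsub : ((m - v : ℕ) : ℝ) = (m : ℝ) - v := by
        push_cast [Nat.cast_sub hvlt.le]; ring
      rw [hsub, ← Real.cos_two_pi_sub]
      congr 1
      field_simp
  have hθ0 : 0 ≤ 2 * Real.pi * w / m := by positivity
  have hθπ : 2 * Real.pi * w / m ≤ Real.pi := by
    rw [div_le_iff₀ hmr]
    have : (2:ℝ) * w ≤ m := by exact_mod_cast hw2
    nlinarith
  have hcos := cos_upper hθ0 hθπ
  have hratio : 2 * Real.pi * w / m / Real.pi = 2 * d := by
    field_simp [hd]
    rw [hd]; field_simp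
  rw [hratio] at hcos
  have hlam_le : lam m k ≤ 1 - (16/3) * d ^ 2 := by
    rw [lam, ← hv, hcos_eq]
    nlinarith [hcos]
  have hlam_ge : -(1/3) ≤ lam m k := by
    rw [lam]
    have := Real.neg_one_le_cos (x := 2 * Real.pi * v / m)
    linarith
  rcases le_or_gt 0 (lam m k) with h | h
  · rw [_root_.abs_of_nonneg h]
    have hexp := Real.add_one_le_exp (-(2 * d ^ 2))
    have : lam m k ≤ 1 - 2 * d ^ 2 := by nlinarith
    linarith
  · rw [_root_.abs_of_neg h]
    have h13 : -(lam m k) ≤ 1/3 := by linarith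
    have hexp := Real.add_one_le_exp (-(1/2 : ℝ))
    have hmono : Real.exp (-(1/2:ℝ)) ≤ Real.exp (-(2 * d ^ 2)) := by
      apply Real.exp_le_exp.2
      nlinarith
    linarith

lemma sum_exp_le (a : ℝ) (ha : 0 < a) (M : ℕ) :
    ∑ j ∈ Finset.range M, Real.exp (-(a * (j:ℝ) ^ 2)) ≤ 2 + 2 / Real.sqrt a := by
  set r := Real.sqrt a with hr
  have hr0 : 0 < r := Real.sqrt_pos.2 ha
  have hra : r ^ 2 = a := Real.sq_sqrt ha.le
  set N : ℕ := ⌈1 / r⌉₊ with hN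
  have hterm : ∀ j : ℕ, Real.exp (-(a * (j:ℝ) ^ 2)) ≤
      (if j < N then (1:ℝ) else 0) + Real.exp (-r) ^ j := by
    intro j
    by_cases hj : j < N
    · rw [if_pos hj]
      have h1 : Real.exp (-(a * (j:ℝ) ^ 2)) ≤ 1 := Real.exp_le_one_iff.2 (neg_nonpos.2 (by positivity))
      have h2 : (0:ℝ) ≤ Real.exp (-r) ^ j := by positivity
      linarith
    · rw [if_neg hj, zero_add]
      push_neg at hj
      have hjr : 1 / r ≤ (j : ℝ) := by
        calc 1 / r ≤ (N : ℝ) := Nat.le_ceil _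
          _ ≤ (j : ℝ) := by exact_mod_cast hj
      have hrj : 1 ≤ r * j := by
        rw [div_le_iff₀ hr0] at hjr
        linarith [mul_comm r (j:ℝ)]
      have hkey : r * j ≤ a * (j:ℝ) ^ 2 := by
        have : r * j * 1 ≤ (r * j) * (r * j) := by nlinarith
        nlinarith [this]
      calc Real.exp (-(a * (j:ℝ) ^ 2)) ≤ Real.exp (-(r * j)) := Real.exp_le_exp.2 (by linarith)
        _ = Real.exp (-r) ^ j := by rw [← Real.exp_nat_mul]; congr 1; ring
  have hq0 : 0 ≤ Real.exp (-r) := (Real.exp_pos _).le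
  have hq1 : Real.exp (-r) ≤ 1 / (1 + r) := by
    have h1 := Real.add_one_le_exp r
    rw [Real.exp_neg, inv_eq_one_div]
    rw [div_le_div_iff₀ (Real.exp_pos r) (by positivity)]
    linarith
  have hqlt : Real.exp (-r) < 1 := by
    have : 1 / (1 + r) < 1 := by
      rw [div_lt_one (by linarith)]; linarith
    linarith
  have hsum1 : ∑ j ∈ Finset.range M, (if j < N then (1:ℝ) else 0) ≤ (N : ℝ) := by
    have heq : ∑ j ∈ Finset.range M, (if j < N then (1:ℝ) else 0)
        = ((Finset.range M).filter (fun j => j < N)).card := by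
      rw [Finset.sum_ite, Finset.sum_const, Finset.sum_const]
      simp
    rw [heq]
    have hsub : (Finset.range M).filter (fun j => j < N) ⊆ Finset.range N := by
      intro x hx
      simp only [Finset.mem_filter, Finset.mem_range] at hx ⊢
      exact hx.2
    have := Finset.card_le_card hsub
    rw [Finset.card_range] at this
    exact_mod_cast this
  have hsum2 : ∑ j ∈ Finset.range M, Real.exp (-r) ^ j ≤ 1 / (1 - Real.exp (-r)) := by
    have hq1' : 0 < 1 - Real.exp (-r) := by linarith
    rw [geom_sum_eq (ne_of_lt hqlt) M]
    rw [show (Real.exp (-r) ^ M - 1) / (Real.exp (-r) - 1)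
        = (1 - Real.exp (-r) ^ M) / (1 - Real.exp (-r)) by rw [← neg_div_neg_eq]; ring_nf]
    rw [div_le_div_iff₀ hq1' hq1']
    have hpow : 0 ≤ Real.exp (-r) ^ M := by positivity
    nlinarith [hpow]
  have hNle : (N : ℝ) ≤ 1 / r + 1 := le_of_lt (Nat.ceil_lt_add_one (by positivity))
  have hgle : 1 / (1 - Real.exp (-r)) ≤ 1 + 1 / r := by
    have h1mq : r / (1 + r) ≤ 1 - Real.exp (-r) := by
      have : 1 - 1 / (1 + r) = r / (1 + r) := by field_simp; ring
      linarith [hq1]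
    have hpos : 0 < r / (1 + r) := by positivity
    calc 1 / (1 - Real.exp (-r)) ≤ 1 / (r / (1 + r)) := by
          apply one_div_le_one_div_of_le hpos h1mq
      _ = (1 + r) / r := by field_simp
      _ = 1 + 1 / r := by field_simp; ring
  calc ∑ j ∈ Finset.range M, Real.exp (-(a * (j:ℝ) ^ 2))
      ≤ ∑ j ∈ Finset.range M, ((if j < N then (1:ℝ) else 0) + Real.exp (-r) ^ j) :=
        Finset.sum_le_sum (fun j _ => hterm j)
    _ = (∑ j ∈ Finset.range M, (if j < N then (1:ℝ) else 0))
        + ∑ j ∈ Finset.range M, Real.exp (-r) ^ j := Finset.sum_add_distrib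
    _ ≤ (N : ℝ) + 1 / (1 - Real.exp (-r)) := add_le_add hsum1 hsum2
    _ ≤ (1 / r + 1) + (1 + 1 / r) := add_le_add hNle hgle
    _ = 2 + 2 / r := by ring

lemma sum_lam_pow_le (hm4 : 4 ≤ m) (t : ℕ) (ht : 1 ≤ t) :
    ∑ k : ZMod m, (lam m k) ^ t ≤ 4 + 4 * m / Real.sqrt (2 * t) := by
  have hm0 : 0 < m := by omega
  have hmr : (0:ℝ) < m := by exact_mod_cast hm0
  have htr : (0:ℝ) < t := by exact_mod_cast ht
  set a : ℝ := 2 * t / m ^ 2 with ha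
  have ha0 : 0 < a := by positivity
  set g : ℕ → ℝ := fun j => Real.exp (-(a * (j:ℝ) ^ 2)) with hg
  have hg0 : ∀ j, 0 ≤ g j := fun j => (Real.exp_pos _).le
  have hsqrt_a : Real.sqrt a = Real.sqrt (2 * t) / m := by
    rw [ha, Real.sqrt_div' _ (by positivity)]
    congr 1
    rw [Real.sqrt_sq hmr.le]
  have hperk : ∀ k : ZMod m, (lam m k) ^ t ≤ g k.val + g (m - k.val) := by
    intro k
    have h1 : (lam m k) ^ t ≤ |lam m k| ^ t := by
      rw [← _root_.abs_pow]; exact le_abs_self _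
    have h2 : |lam m k| ^ t ≤ Real.exp (-(2 * (((min k.val (m - k.val) : ℕ) : ℝ) / m) ^ 2)) ^ t :=
      pow_le_pow_left₀ (abs_nonneg _) (lam_abs_le m k) t
    have h3 : Real.exp (-(2 * (((min k.val (m - k.val) : ℕ) : ℝ) / m) ^ 2)) ^ t
        = g (min k.val (m - k.val)) := by
      rw [hg, ← Real.exp_nat_mul]
      congr 1
      field_simp [ha]
      rw [ha]; field_simp
    have h4 : g (min k.val (m - k.val)) ≤ g k.val + g (m - k.val) := by
      rcases min_cases k.val (m - k.val) with ⟨hmin, _⟩ | ⟨hmin, _⟩ <;> rw [hmin]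
      · linarith [hg0 (m - k.val)]
      · linarith [hg0 k.val]
    calc (lam m k) ^ t ≤ |lam m k| ^ t := h1
      _ ≤ _ := h2
      _ = g (min k.val (m - k.val)) := h3
      _ ≤ g k.val + g (m - k.val) := h4
  have hs1 : ∑ k : ZMod m, g k.val ≤ 2 + 2 / Real.sqrt a := by
    rw [sum_val m g]
    exact sum_exp_le a ha0 m
  have hs2 : ∑ k : ZMod m, g (m - k.val) ≤ 2 + 2 / Real.sqrt a := by
    rw [sum_val m (fun j => g (m - j))]
    have hrefl : ∑ j ∈ Finset.range m, g (m - j) = ∑ j ∈ Finset.range m, g (j + 1) := by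
      rw [← Finset.sum_range_reflect (fun j => g (j + 1)) m]
      apply Finset.sum_congr rfl
      intro j hj
      have hjm := Finset.mem_range.1 hj
      congr 1
      omega
    rw [hrefl]
    have hsucc := Finset.sum_range_succ' g m
    have : ∑ j ∈ Finset.range m, g (j + 1) ≤ ∑ j ∈ Finset.range (m + 1), g j := by
      rw [hsucc]
      linarith [hg0 0]
    calc ∑ j ∈ Finset.range m, g (j + 1) ≤ ∑ j ∈ Finset.range (m + 1), g j := this
      _ ≤ 2 + 2 / Real.sqrt a := sum_exp_le a ha0 (m + 1)
  calc ∑ k : ZMod m, (lam m k) ^ t ≤ ∑ k : ZMod m, (g k.val + g (m - k.val)) :=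
        Finset.sum_le_sum (fun k _ => hperk k)
    _ = (∑ k : ZMod m, g k.val) + ∑ k : ZMod m, g (m - k.val) := Finset.sum_add_distrib
    _ ≤ (2 + 2 / Real.sqrt a) + (2 + 2 / Real.sqrt a) := add_le_add hs1 hs2
    _ = 4 + 4 / Real.sqrt a := by ring
    _ = 4 + 4 * m / Real.sqrt (2 * t) := by
        rw [hsqrt_a, div_div_eq_mul_div]

theorem stmt_10 : ∃ C : ℝ, 0 < C ∧
    ∀ (n m : ℕ), 1 ≤ n → m = 2 * n → ∀ [NeZero m],
    ∀ (P : Matrix (ZMod m) (ZMod m) ℝ),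
    (∀ i j : ZMod m, P i j = if j = i - 1 ∨ j = i ∨ j = i + 1 then (1/3 : ℝ) else 0) →
    ∀ t : ℕ, 1 ≤ t → t ≤ n ^ 2 →
      (P ^ t) 1 1 ≤ C / Real.sqrt t := by
  refine ⟨5, by norm_num, ?_⟩
  intro n m hn hm _ P hP t ht1 ht2
  have htr : (1:ℝ) ≤ t := by exact_mod_cast ht1
  have hst1 : 1 ≤ Real.sqrt t := by
    rw [show (1:ℝ) = Real.sqrt 1 by rw [Real.sqrt_one]]
    exact Real.sqrt_le_sqrt htr
  have hst0 : 0 < Real.sqrt t := by linarith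
  by_cases hn1 : n = 1
  · -- n = 1 : t = 1
    have ht : t = 1 := by
      subst hn1; omega
    subst ht
    rw [pow_one, hP 1 1, if_pos (Or.inr (Or.inl rfl))]
    rw [show ((1:ℕ):ℝ) = 1 by norm_num, Real.sqrt_one]
    norm_num
  · have hn2 : 2 ≤ n := by omega
    have hm4 : 4 ≤ m := by omega
    have hm0 : 0 < m := by omega
    have hmr : (0:ℝ) < m := by exact_mod_cast hm0
    have hid := main_identity m hm4 P hP t
    have hsum := sum_lam_pow_le m hm4 t ht1
    have hq : (P ^ t) 1 1 ≤ (4 + 4 * m / Real.sqrt (2 * t)) / m := by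
      rw [le_div_iff₀ hmr]
      calc (P ^ t) 1 1 * m = (m:ℝ) * (P ^ t) 1 1 := by ring
        _ = ∑ k : ZMod m, (lam m k) ^ t := hid
        _ ≤ _ := hsum
    have hs2t : (0:ℝ) < Real.sqrt (2 * t) := Real.sqrt_pos.2 (by positivity)
    have hsplit : (4 + 4 * (m:ℝ) / Real.sqrt (2 * t)) / m = 4 / m + 4 / Real.sqrt (2 * t) := by
      rw [add_div, show 4 * (m:ℝ) / Real.sqrt (2 * t) = (m:ℝ) * (4 / Real.sqrt (2 * t)) by ring,
        mul_div_cancel_left₀ _ (ne_of_gt hmr)]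
    have hsqn : Real.sqrt t ≤ n := by
      have hcast : (t:ℝ) ≤ (n:ℝ)^2 := by exact_mod_cast ht2
      calc Real.sqrt t ≤ Real.sqrt ((n:ℝ)^2) := Real.sqrt_le_sqrt hcast
        _ = n := Real.sqrt_sq (by positivity)
    have h1 : 4 / (m:ℝ) ≤ 2 / Real.sqrt t := by
      have hmcast : (m:ℝ) = 2 * n := by rw [hm]; push_cast; ring
      rw [hmcast, div_le_div_iff₀ (by positivity) hst0]
      linarith [hsqn]
    have h2 : 4 / Real.sqrt (2 * t) ≤ 3 / Real.sqrt t := by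
      have h2t : Real.sqrt (2 * (t:ℝ)) = Real.sqrt 2 * Real.sqrt t := Real.sqrt_mul (by norm_num) t
      have hs2 : (1.4:ℝ) ≤ Real.sqrt 2 := by
        nlinarith [Real.sq_sqrt (by norm_num : (0:ℝ) ≤ 2), Real.sqrt_nonneg 2]
      have hmul := mul_le_mul_of_nonneg_right hs2 hst0.le
      rw [h2t, div_le_div_iff₀ (by positivity) hst0]
      nlinarith [hmul]
    calc (P ^ t) 1 1 ≤ 4 / m + 4 / Real.sqrt (2 * t) := by rw [← hsplit]; exact hq
      _ ≤ 2 / Real.sqrt t + 3 / Real.sqrt t := add_le_add h1 h2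
      _ = 5 / Real.sqrt t := by ring
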